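/- Let μ_α be the Bernoulli-type law (1 − α/2)δ₀ + (α/2)δ₂ with generating function G(t) = (1 − α/2) + (α/2)t², for 0 < α < 1. Then t_c := min{t ≥ 0 : 2(G(t) − tG'(t))² = t²G(t)G''(t)} equals √((2−α)/(3α)), and the inequality (t_c − 2)G(t_c) ≥ t_c(t_c − 1)G'(t_c) holds if and only if α ≤ 1/14. -/

import Mathlib

/-- For `Binary₀/₂` car arrivals `μ_α = (1 - α/2) δ₀ + (α/2) δ₂`, with
generating function `G(t) = (1 - α/2) + (α/2) t²`, the point
`t_c = min {t ≥ 0 : 2 (G t - t G' t)² = t² G t G'' t}` equals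
`√((2 - α)/(3α))`, and the subcriticality inequality
`(t_c - 2) G(t_c) ≥ t_c (t_c - 1) G'(t_c)` holds iff `α ≤ 1/14`. -/
theorem stmt7 (α : ℝ) (hα : 0 < α) (hα1 : α < 1)
    (G G' G'' : ℝ → ℝ)
    (hG : ∀ t, G t = (1 - α / 2) + (α / 2) * t ^ 2)
    (hG' : ∀ t, G' t = α * t)
    (hG'' : ∀ t, G'' t = α) :
    IsLeast {t : ℝ | 0 ≤ t ∧ 2 * (G t - t * G' t) ^ 2 = t ^ 2 * G t * G'' t}
      (Real.sqrt ((2 - α) / (3 * α))) ∧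
    ((Real.sqrt ((2 - α) / (3 * α)) - 2) * G (Real.sqrt ((2 - α) / (3 * α)))
        ≥ Real.sqrt ((2 - α) / (3 * α)) * (Real.sqrt ((2 - α) / (3 * α)) - 1)
          * G' (Real.sqrt ((2 - α) / (3 * α)))
      ↔ α ≤ 1 / 14) := by
  have ha : (0:ℝ) < 2 - α := by linarith
  have hsnn : (0:ℝ) ≤ (2 - α) / (3 * α) := by positivity
  set t : ℝ := Real.sqrt ((2 - α) / (3 * α)) with ht
  have ht0 : 0 ≤ t := Real.sqrt_nonneg _
  have ht2 : t ^ 2 = (2 - α) / (3 * α) := Real.sq_sqrt hsnn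
  have h3 : α * t ^ 2 = (2 - α) / 3 := by
    rw [ht2]; field_simp
  have hkey : (t - 2) * G t - t * (t - 1) * G' t = (2 - α) / 3 * (t - 3) := by
    rw [hG, hG']
    linear_combination (-(t / 2)) * h3
  refine ⟨⟨⟨ht0, ?_⟩, ?_⟩, ?_⟩
  · rw [hG, hG', hG'']
    linear_combination (-(3 * (2 - α) / 2)) * h3
  · rintro u ⟨hu0, hueq⟩
    rw [hG, hG', hG''] at hueq
    have h0 : (2 - α) * ((2 - α) - 3 * (α * u ^ 2)) = 0 := by
      linear_combination 2 * hueq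
    rcases mul_eq_zero.mp h0 with h | h
    · linarith
    · have hu2 : u ^ 2 = (2 - α) / (3 * α) := by
        field_simp; linarith
      exact le_of_eq (by rw [ht, ← hu2, Real.sqrt_sq hu0])
  · constructor
    · intro h
      have h9 : 3 ≤ t := by nlinarith [hkey]
      have : (9:ℝ) ≤ (2 - α) / (3 * α) := by nlinarith [ht2]
      rw [le_div_iff₀ (by positivity)] at this
      linarith
    · intro h
      have h9 : (9:ℝ) ≤ (2 - α) / (3 * α) := by
        rw [le_div_iff₀ (by positivity)]; linarith
      have h3t : (3:ℝ) ≤ t := by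
        calc (3:ℝ) = Real.sqrt 9 := by
              rw [show (9:ℝ) = 3 ^ 2 by norm_num, Real.sqrt_sq (by norm_num)]
          _ ≤ t := Real.sqrt_le_sqrt h9
      nlinarith [hkey]
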